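/- Let d ∈ ℕ with d ≥ 1 and let p ≥ 2 be a real number. There exists a constant K > 0, depending only on p, such that for all y₁, y₂ ∈ ℝ^d: ‖y₁ + y₂‖^p − ‖y₁‖^p − p ‖y₁‖^{p−2} ⟨y₁, y₂⟩ ≤ K ( ‖y₁‖^{p−2} ‖y₂‖² + ‖y₂‖^p ). -/

import Mathlib

lemma sq_rpow_half (x p : ℝ) (hx : 0 ≤ x) : (x ^ 2) ^ (p/2) = x ^ p := by
  rw [← Real.rpow_natCast x 2, ← Real.rpow_mul hx]
  congr 1
  ring

lemma rmul (a q r : ℝ) (ha : 0 ≤ a) (h : q + 1 = r) (hr : r ≠ 0) : a ^ q * a = a ^ r := by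
  rcases eq_or_lt_of_le ha with h0 | h0
  · rw [← h0, mul_zero, Real.zero_rpow hr]
  · rw [← h, Real.rpow_add_one h0.ne']

lemma rpow_step2 (b p : ℝ) (hb : 0 ≤ b) (hp : 2 ≤ p) : b ^ (p-2) * b ^ 2 = b ^ p := by
  rcases eq_or_lt_of_le hb with h | h
  · rw [← h, Real.zero_rpow (by linarith : p ≠ 0)]
    norm_num
  · rw [← Real.rpow_natCast b 2, ← Real.rpow_add h]
    norm_num

lemma lemA (q x y : ℝ) (hq : 1 ≤ q) (hy : 0 ≤ y) (hxy : y ≤ x) :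
    x ^ q - y ^ q ≤ q * x ^ (q-1) * (x - y) := by
  rcases eq_or_lt_of_le (hy.trans hxy) with h | hx
  · have hy0 : y = 0 := le_antisymm (h ▸ hxy) hy
    simp [← h, hy0]
  · have hs : -1 ≤ y / x - 1 := by
      have : 0 ≤ y / x := div_nonneg hy hx.le
      linarith
    have hb := one_add_mul_self_le_rpow_one_add hs hq
    rw [show 1 + (y/x - 1) = y / x by ring, Real.div_rpow hy hx.le] at hb
    have hxq : 0 < x ^ q := Real.rpow_pos_of_pos hx q
    have key2 : (1 + q*(y/x-1)) * x ^ q ≤ y ^ q := (le_div_iff₀ hxq).mp hb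
    have h1 : x ^ (q-1) = x ^ q / x := Real.rpow_sub_one hx.ne' q
    rw [h1]
    have expand : (1 + q*(y/x-1)) * x ^ q = x ^ q - q * (x ^ q / x) * (x - y) := by
      field_simp
      ring
    rw [expand] at key2
    linarith

lemma lemB (q x y : ℝ) (hq : 1 < q) (hy : 0 ≤ y) (hxy : y ≤ x) :
    q * y ^ (q-1) * (x - y) ≤ x ^ q - y ^ q := by
  rcases eq_or_lt_of_le hy with h | hy0
  · rw [← h, Real.zero_rpow (by linarith : q - 1 ≠ 0), Real.zero_rpow (by linarith : q ≠ 0)]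
    have : 0 ≤ x ^ q := Real.rpow_nonneg (h ▸ hxy) q
    simpa using this
  · have hs : -1 ≤ x / y - 1 := by
      have : 0 ≤ x / y := div_nonneg (hy.trans hxy) hy
      linarith
    have hb := one_add_mul_self_le_rpow_one_add hs hq.le
    rw [show 1 + (x/y - 1) = x / y by ring, Real.div_rpow (hy.trans hxy) hy] at hb
    have hyq : 0 < y ^ q := Real.rpow_pos_of_pos hy0 q
    have key2 : (1 + q*(x/y-1)) * y ^ q ≤ x ^ q := (le_div_iff₀ hyq).mp hb
    have h1 : y ^ (q-1) = y ^ q / y := Real.rpow_sub_one hy0.ne' q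
    rw [h1]
    have expand : (1 + q*(x/y-1)) * y ^ q = y ^ q + q * (y ^ q / y) * (x - y) := by
      field_simp
    rw [expand] at key2
    linarith

lemma eplus (p a b : ℝ) (hp : 2 ≤ p) (ha : 0 ≤ a) (hb : 0 ≤ b) :
    (a+b)^p - a^p - p * a^(p-2) * (a*b) ≤
      (p*(p-1)*(2:ℝ)^p + p + 1) * (a^(p-2) * b^2 + b^p) := by
  have hab : (0:ℝ) ≤ a + b := by linarith
  have h1 := lemA p (a+b) a (by linarith) ha (by linarith)
  rw [show a + b - a = b by ring] at h1
  have h2 := lemA (p-1) (a+b) a (by linarith) ha (by linarith)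
  rw [show a + b - a = b by ring, show p - 1 - 1 = p - 2 by ring] at h2
  -- (a+b)^(p-2) ≤ 2^(p-2) * (a^(p-2) + b^(p-2))
  have h3 : (a+b)^(p-2) ≤ (2:ℝ)^(p-2) * (a^(p-2) + b^(p-2)) := by
    have hapn : 0 ≤ a ^ (p-2) := Real.rpow_nonneg ha _
    have hbpn : 0 ≤ b ^ (p-2) := Real.rpow_nonneg hb _
    have h2n : (0:ℝ) ≤ (2:ℝ)^(p-2) := Real.rpow_nonneg (by norm_num) _
    rcases le_total a b with h | h
    · have : (a+b)^(p-2) ≤ (2*b)^(p-2) :=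
        Real.rpow_le_rpow hab (by linarith) (by linarith)
      rw [Real.mul_rpow (by norm_num) hb] at this
      nlinarith
    · have : (a+b)^(p-2) ≤ (2*a)^(p-2) :=
        Real.rpow_le_rpow hab (by linarith) (by linarith)
      rw [Real.mul_rpow (by norm_num) ha] at this
      nlinarith
  have hrw : p * a^(p-2) * (a*b) = p * a^(p-1) * b := by
    rw [show p * a^(p-2) * (a*b) = p * (a^(p-2) * a) * b by ring,
      rmul a (p-2) (p-1) ha (by ring) (by linarith)]
  rw [hrw]
  -- combine: LHS ≤ p*b*((a+b)^(p-1) - a^(p-1)) ≤ p*b*(p-1)*(a+b)^(p-2)*b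
  have hpb : (0:ℝ) ≤ p * b := by positivity
  have h4 := mul_le_mul_of_nonneg_left h2 hpb
  have step : (a+b)^p - a^p - p * a^(p-1) * b ≤ p*(p-1)*(a+b)^(p-2)*b^2 := by
    nlinarith [h1, h4]
  have hbp2 : b^(p-2) * b^2 = b^p := rpow_step2 b p hb hp
  have hapn : 0 ≤ a ^ (p-2) := Real.rpow_nonneg ha _
  have hbpn : 0 ≤ b ^ (p-2) := Real.rpow_nonneg hb _
  have hbpp : 0 ≤ b ^ p := Real.rpow_nonneg hb _
  have h2n : (0:ℝ) ≤ (2:ℝ)^(p-2) := Real.rpow_nonneg (by norm_num) _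
  have h2le : (2:ℝ)^(p-2) ≤ (2:ℝ)^p :=
    Real.rpow_le_rpow_of_exponent_le (by norm_num) (by linarith)
  have hpp1 : (0:ℝ) ≤ p * (p-1) := by nlinarith
  have step2 : p*(p-1)*(a+b)^(p-2)*b^2 ≤ p*(p-1)*((2:ℝ)^(p-2) * (a^(p-2) + b^(p-2)))*b^2 := by
    nlinarith [sq_nonneg b, mul_le_mul_of_nonneg_left h3 hpp1]
  have step3 : p*(p-1)*((2:ℝ)^(p-2) * (a^(p-2) + b^(p-2)))*b^2 ≤
      (p*(p-1)*(2:ℝ)^p + p + 1) * (a^(p-2) * b^2 + b^p) := by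
    have expand : p*(p-1)*((2:ℝ)^(p-2) * (a^(p-2) + b^(p-2)))*b^2
        = p*(p-1)*(2:ℝ)^(p-2) * (a^(p-2)*b^2 + b^(p-2)*b^2) := by ring
    rw [expand, hbp2]
    have hR : 0 ≤ a^(p-2)*b^2 + b^p := by positivity
    have hcoef : p*(p-1)*(2:ℝ)^(p-2) ≤ p*(p-1)*(2:ℝ)^p + p + 1 := by
      nlinarith [mul_le_mul_of_nonneg_left h2le hpp1]
    exact mul_le_mul_of_nonneg_right hcoef hR
  linarith

lemma eminus (p a b : ℝ) (hp : 2 ≤ p) (ha : 0 ≤ a) (hb : 0 ≤ b) :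
    |a-b|^p - a^p + p * a^(p-2) * (a*b) ≤
      (p*(p-1)*(2:ℝ)^p + p + 1) * (a^(p-2) * b^2 + b^p) := by
  have hrw : p * a^(p-2) * (a*b) = p * a^(p-1) * b := by
    rw [show p * a^(p-2) * (a*b) = p * (a^(p-2) * a) * b by ring,
      rmul a (p-2) (p-1) ha (by ring) (by linarith)]
  rw [hrw]
  have hapn : 0 ≤ a ^ (p-2) := Real.rpow_nonneg ha _
  have hbpp : 0 ≤ b ^ p := Real.rpow_nonneg hb _
  have happ : 0 ≤ a ^ p := Real.rpow_nonneg ha _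
  have h2p : (0:ℝ) ≤ (2:ℝ)^p := Real.rpow_nonneg (by norm_num) _
  have hpp1 : (0:ℝ) ≤ p * (p-1) := by nlinarith
  rcases le_total a b with h | h
  · -- a ≤ b
    have habs : |a - b| = b - a := by rw [abs_sub_comm, abs_of_nonneg (by linarith)]
    rw [habs]
    have h1 : (b-a)^p ≤ b^p := Real.rpow_le_rpow (by linarith) (by linarith) (by linarith)
    have h2 : a^(p-1) ≤ b^(p-1) := Real.rpow_le_rpow ha h (by linarith)
    have h3 : b^(p-1) * b = b^p := rmul b (p-1) p hb (by ring) (by linarith)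
    have hpb : (0:ℝ) ≤ p * b := by positivity
    have h4 : p * a^(p-1) * b ≤ p * b^p := by
      rw [← h3]
      nlinarith [mul_le_mul_of_nonneg_left h2 hpb]
    nlinarith [mul_nonneg (mul_nonneg hpp1 h2p) hbpp, mul_nonneg hapn (sq_nonneg b),
      mul_nonneg (mul_nonneg (mul_nonneg hpp1 h2p) hapn) (sq_nonneg b)]
  · -- b ≤ a
    have habs : |a - b| = a - b := abs_of_nonneg (by linarith)
    rw [habs]
    have hB := lemB p a (a-b) (by linarith) (by linarith) (by linarith)
    rw [show a - (a-b) = b by ring] at hB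
    have hA := lemA (p-1) a (a-b) (by linarith) (by linarith) (by linarith)
    rw [show a - (a-b) = b by ring, show p - 1 - 1 = p - 2 by ring] at hA
    have hpb : (0:ℝ) ≤ p * b := by positivity
    have h4 := mul_le_mul_of_nonneg_left hA hpb
    have step : (a-b)^p - a^p + p * a^(p-1) * b ≤ p*(p-1)*a^(p-2)*b^2 := by
      nlinarith [hB, h4]
    have step2 : p*(p-1)*a^(p-2)*b^2 ≤ (p*(p-1)*(2:ℝ)^p + p + 1) * (a^(p-2) * b^2 + b^p) := by
      have h2ge1 : (1:ℝ) ≤ (2:ℝ)^p := by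
        nlinarith [Real.rpow_le_rpow_of_exponent_le (by norm_num : (1:ℝ) ≤ 2) (by linarith : (0:ℝ) ≤ p), Real.rpow_zero 2]
      nlinarith [mul_nonneg hapn (sq_nonneg b), mul_nonneg hpp1 (mul_nonneg hapn (sq_nonneg b)),
        mul_nonneg (mul_nonneg hpp1 h2p) hbpp]
    linarith

lemma master (p : ℝ) (hp : 2 ≤ p) (a b t : ℝ) (ha : 0 ≤ a) (hb : 0 ≤ b)
    (ht : |t| ≤ a * b) :
    (a^2 + 2*t + b^2) ^ (p/2) - a^p - p * a^(p-2) * t ≤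
      (p*(p-1)*(2:ℝ)^p + p + 1) * (a^(p-2) * b^2 + b^p) := by
  have hC : (0:ℝ) < p*(p-1)*(2:ℝ)^p + p + 1 := by
    have h2p : (0:ℝ) ≤ (2:ℝ)^p := Real.rpow_nonneg (by norm_num) _
    have hpp1 : (0:ℝ) ≤ p * (p-1) := by nlinarith
    nlinarith [mul_nonneg hpp1 h2p]
  obtain ⟨ht1, ht2⟩ := abs_le.mp ht
  rcases eq_or_lt_of_le (mul_nonneg ha hb) with hab | hab
  · -- a*b = 0, so t = 0
    have ht0 : t = 0 := by
      have := abs_nonneg t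
      have : |t| = 0 := le_antisymm (hab ▸ ht) this
      exact abs_eq_zero.mp this
    subst ht0
    rcases mul_eq_zero.mp hab.symm with h0 | h0
    · subst h0
      have : ((0:ℝ)^2 + 2*0 + b^2) ^ (p/2) = b ^ p := by
        rw [show (0:ℝ)^2 + 2*0 + b^2 = b^2 by ring, sq_rpow_half b p hb]
      rw [this, Real.zero_rpow (by linarith : p ≠ 0)]
      have hR : 0 ≤ (0:ℝ)^(p-2) * b^2 + b^p := by positivity
      have hbpp : 0 ≤ b ^ p := Real.rpow_nonneg hb _
      have h0p2 : 0 ≤ (0:ℝ)^(p-2) := Real.rpow_nonneg le_rfl _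
      have h2p : (0:ℝ) ≤ (2:ℝ)^p := Real.rpow_nonneg (by norm_num) _
      have hpp1 : (0:ℝ) ≤ p * (p-1) := by nlinarith
      nlinarith [mul_nonneg hC.le (mul_nonneg h0p2 (sq_nonneg b)),
        mul_nonneg (mul_nonneg hpp1 h2p) hbpp, hbpp]
    · subst h0
      have : (a^2 + 2*0 + (0:ℝ)^2) ^ (p/2) = a ^ p := by
        rw [show a^2 + 2*0 + (0:ℝ)^2 = a^2 by ring, sq_rpow_half a p ha]
      rw [this]
      have hR : 0 ≤ a^(p-2) * (0:ℝ)^2 + (0:ℝ)^p := by positivity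
      nlinarith
  · -- 0 < a*b
    set C := p*(p-1)*(2:ℝ)^p + p + 1 with hCdef
    set R := a^(p-2) * b^2 + b^p with hRdef
    set μ := (a*b + t)/(2*(a*b)) with hμdef
    set ν := (a*b - t)/(2*(a*b)) with hνdef
    have hμ : 0 ≤ μ := div_nonneg (by linarith) (by linarith)
    have hν : 0 ≤ ν := div_nonneg (by linarith) (by linarith)
    have ha0 : a ≠ 0 := left_ne_zero_of_mul hab.ne'
    have hb0 : b ≠ 0 := right_ne_zero_of_mul hab.ne'
    have hsum : μ + ν = 1 := by
      rw [hμdef, hνdef]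
      field_simp
      ring
    have ht3 : μ * (a*b) - ν * (a*b) = t := by
      rw [hμdef, hνdef]
      field_simp
      ring
    have hconv := (convexOn_rpow (by linarith : 1 ≤ p/2)).2
      (Set.mem_Ici.mpr (sq_nonneg (a+b))) (Set.mem_Ici.mpr (sq_nonneg (a-b))) hμ hν hsum
    simp only [smul_eq_mul] at hconv
    have harg : μ * ((a+b)^2) + ν * ((a-b)^2) = a^2 + 2*t + b^2 := by
      have hne : (a*b) ≠ 0 := ne_of_gt hab
      rw [hμdef, hνdef]
      field_simp
      ring
    rw [harg] at hconv
    have hplus : ((a+b)^2) ^ (p/2) = (a+b)^p := sq_rpow_half (a+b) p (by linarith)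
    have hminus : ((a-b)^2) ^ (p/2) = |a-b|^p := by
      rw [← sq_abs (a-b), sq_rpow_half _ p (abs_nonneg _)]
    rw [hplus, hminus] at hconv
    have hEp := eplus p a b hp ha hb
    have hEm := eminus p a b hp ha hb
    have h1 : μ * ((a+b)^p - a^p - p * a^(p-2) * (a*b)) ≤ μ * (C * R) :=
      mul_le_mul_of_nonneg_left hEp hμ
    have h2 : ν * (|a-b|^p - a^p + p * a^(p-2) * (a*b)) ≤ ν * (C * R) :=
      mul_le_mul_of_nonneg_left hEm hν
    have ht4 : p * a^(p-2) * (μ*(a*b) - ν*(a*b)) = p * a^(p-2) * t := by rw [ht3]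
    have ha4 : a^p * (μ + ν) = a^p := by rw [hsum, mul_one]
    have mid : (a^2 + 2*t + b^2) ^ (p/2) - a^p - p * a^(p-2) * t ≤
        μ * ((a+b)^p - a^p - p * a^(p-2) * (a*b)) +
        ν * (|a-b|^p - a^p + p * a^(p-2) * (a*b)) := by
      nlinarith [hconv, ht4, ha4]
    calc (a^2 + 2*t + b^2) ^ (p/2) - a^p - p * a^(p-2) * t
        ≤ μ * ((a+b)^p - a^p - p * a^(p-2) * (a*b)) +
          ν * (|a-b|^p - a^p + p * a^(p-2) * (a*b)) := mid
      _ ≤ μ * (C * R) + ν * (C * R) := by linarith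
      _ = C * R := by rw [← add_mul, hsum, one_mul]

/-- Taylor-type estimate for the map `y ↦ ‖y‖^p`, `p ≥ 2`:
`‖y₁+y₂‖^p − ‖y₁‖^p − p‖y₁‖^{p−2}⟨y₁,y₂⟩ ≤ K(‖y₁‖^{p−2}‖y₂‖² + ‖y₂‖^p)`. -/
theorem stmt_10 (d : ℕ) (hd : 1 ≤ d) (p : ℝ) (hp : 2 ≤ p) :
    ∃ K > 0, ∀ y₁ y₂ : EuclideanSpace ℝ (Fin d),
      ‖y₁ + y₂‖ ^ p - ‖y₁‖ ^ p - p * ‖y₁‖ ^ (p - 2) * (inner ℝ y₁ y₂ : ℝ) ≤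
        K * (‖y₁‖ ^ (p - 2) * ‖y₂‖ ^ 2 + ‖y₂‖ ^ p) := by

  refine ⟨p*(p-1)*(2:ℝ)^p + p + 1, ?_, ?_⟩
  · have h2p : (0:ℝ) ≤ (2:ℝ)^p := Real.rpow_nonneg (by norm_num) _
    have hpp1 : (0:ℝ) ≤ p * (p-1) := by nlinarith
    nlinarith [mul_nonneg hpp1 h2p]
  · intro y₁ y₂
    have hn : ‖y₁ + y₂‖ ^ p = (‖y₁‖^2 + 2*(inner ℝ y₁ y₂ : ℝ) + ‖y₂‖^2) ^ (p/2) := by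
      rw [← norm_add_sq_real, sq_rpow_half _ p (norm_nonneg _)]
    rw [hn]
    exact master p hp _ _ _ (norm_nonneg _) (norm_nonneg _) (abs_real_inner_le_norm y₁ y₂)
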